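/- Let θ : [0,T) → ℝ be continuous with θ(s) > 0 for all s, let F : [0,T) × ℝ → ℝ be continuous, and let v : [0,T) → ℝ be a C¹ solution of (1 − v²)v' + (1 − v²)F(s,v) + θ = 0 with |v(0)| < 1. Then |v(s)| < 1 for all s ∈ [0,T). -/
import Mathlib


open Set

/-- Barrier estimate for the reduced generalized Jang equation: if `v` is a `C¹` solution of
`(1 − v²)v' + (1 − v²)F(s,v) + θ = 0` on `[0,T)` with `θ > 0` continuous, `F` continuous,
and `|v(0)| < 1`, then `|v(s)| < 1` on `[0,T)`. -/
theorem jang_barrier (T : ℝ) (hT : 0 < T) (θ : ℝ → ℝ) (F : ℝ → ℝ → ℝ)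
    (v v' : ℝ → ℝ)
    (hθc : ContinuousOn θ (Ico 0 T)) (hθ : ∀ s ∈ Ico (0 : ℝ) T, 0 < θ s)
    (hFc : ContinuousOn (fun p : ℝ × ℝ => F p.1 p.2) ((Ico 0 T) ×ˢ (univ : Set ℝ)))
    (hv : ∀ s ∈ Ico (0 : ℝ) T, HasDerivAt v (v' s) s)
    (hv'c : ContinuousOn v' (Ico 0 T))
    (hODE : ∀ s ∈ Ico (0 : ℝ) T,
      (1 - v s ^ 2) * v' s + (1 - v s ^ 2) * F s (v s) + θ s = 0)
    (h0 : |v 0| < 1) :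
    ∀ s ∈ Ico (0 : ℝ) T, |v s| < 1 := by
  -- At any point where |v s| = 1, the ODE forces θ s = 0, contradicting θ > 0.
  have hne : ∀ s ∈ Ico (0 : ℝ) T, |v s| ≠ 1 := by
    intro s hs habs
    have hsq : v s ^ 2 = 1 := by
      have := sq_abs (v s)
      rw [habs] at this
      simpa using this.symm
    have := hODE s hs
    rw [hsq] at this
    simp at this
    exact absurd this (ne_of_gt (hθ s hs))
  -- v is continuous on Ico 0 T
  have hvc : ContinuousOn v (Ico 0 T) := fun s hs =>
    (hv s hs).continuousAt.continuousWithinAt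
  intro s hs
  by_contra hge
  push_neg at hge
  have hgt : 1 < |v s| := lt_of_le_of_ne hge (fun h => hne s hs h.symm)
  have hs0 : (0 : ℝ) ≤ s := hs.1
  have hsub : Icc (0 : ℝ) s ⊆ Ico 0 T := fun x hx =>
    ⟨hx.1, lt_of_le_of_lt hx.2 hs.2⟩
  have hgc : ContinuousOn (fun x => |v x|) (Icc 0 s) :=
    (hvc.mono hsub).abs
  have hmem : (1 : ℝ) ∈ Icc (|v 0|) (|v s|) := ⟨le_of_lt h0, le_of_lt hgt⟩
  obtain ⟨x, hx, hxe⟩ := intermediate_value_Icc hs0 hgc hmem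
  exact hne x (hsub hx) hxe
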